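/- Let X(S,ψ) be a regular consumption process with PHPP ψ whose relative rates are deterministic: Z_k ≡ z_k with z_k ∈ [0,1) for k < K and z_K ∈ [0,1]. Let k_0 be the maximal k with z_k = 0. Then ψ_k(S_{k+1}/S_k) ≡ z_k/((1-z_k)·z_{k+1}) for k = k_0,...,K-1, and ψ_K ≡ z_K. -/

import Mathlib

open MeasureTheory Finset

/-- if the relative rates of `X(S,ψ)` are deterministic constants `z_k`
(`z_k ∈ [0,1)` for `k < K`, `z_K ∈ [0,1]`) and `k₀` is the maximal `k` with `z_k = 0`,
then `ψ_k(S_{k+1}/S_k) ≡ z_k/((1-z_k)·z_{k+1})` for `k₀ ≤ k < K`, and `ψ_K ≡ z_K`. -/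
theorem PHPP_from_deterministic_rates
    {Ω : Type*} {m : MeasurableSpace Ω} (K : ℕ) (ℱ : Filtration ℕ m)
    (S : ℕ → Ω → ℝ) (Z : ℕ → Ω → ℝ) (z : ℕ → ℝ) (k₀ : ℕ)
    (hSadapted : ∀ k : ℕ, Measurable[ℱ k] (S k))
    (hSpos : ∀ k ω, 0 < S k ω)
    (ψ : ℕ → (Ω → ℝ) → (Ω → ℝ)) (ψK : Ω → ℝ)
    (hψmeas : ∀ k < K, ∀ f : Ω → ℝ, Measurable[ℱ (k + 1)] f → Measurable[ℱ k] (ψ k f))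
    (hψpos : ∀ k < K, ∀ f : Ω → ℝ, (∀ ω, 0 ≤ f ω) → ∀ ω, 0 ≤ ψ k f ω)
    (hψneg : ∀ k < K, ∀ f : Ω → ℝ, (∀ ω, f ω ≤ 0) → ∀ ω, ψ k f ω ≤ 0)
    (hψhom : ∀ k < K, ∀ f g : Ω → ℝ, Measurable[ℱ (k + 1)] f → Measurable[ℱ k] g →
      (∀ ω, 0 ≤ g ω) → ψ k (fun ω => g ω * f ω) = fun ω => g ω * ψ k f ω)
    (hψKmeas : Measurable[ℱ K] ψK) (hψK01 : ∀ ω, 0 ≤ ψK ω ∧ ψK ω ≤ 1)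
    -- Z given by the backward recursion of Theorem 1
    (hZK : Z K = ψK)
    (hZrec : ∀ k < K, ∀ ω, Z k ω =
      ψ k (fun ω' => Z (k + 1) ω' * S (k + 1) ω') ω /
        (S k ω + ψ k (fun ω' => Z (k + 1) ω' * S (k + 1) ω') ω))
    -- the rates are deterministic constants z_k
    (hZdet : ∀ k ≤ K, Z k = fun _ => z k)
    (hz : ∀ k < K, 0 ≤ z k ∧ z k < 1) (hzK : 0 ≤ z K ∧ z K ≤ 1)
    -- k₀ is the maximal index with z_{k₀} = 0
    (hk₀ : k₀ ≤ K) (hzk₀ : z k₀ = 0) (hk₀max : ∀ j ≤ K, k₀ < j → z j ≠ 0) :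
    (∀ k, k₀ ≤ k → k < K →
      ψ k (fun ω => S (k + 1) ω / S k ω) = fun _ => z k / ((1 - z k) * z (k + 1))) ∧
    ψK = fun _ => z K := by
  constructor
  · intro k hk₀k hkK
    have hk1K : k + 1 ≤ K := hkK
    have hz1 : z (k + 1) ≠ 0 :=
      hk₀max (k + 1) hk1K (lt_of_le_of_lt hk₀k (Nat.lt_succ_self k))
    have hz1pos : 0 ≤ z (k + 1) := by
      rcases lt_or_eq_of_le hk1K with h | h
      · exact (hz _ h).1
      · rw [h]; exact hzK.1
    have hzk1 : z k < 1 := (hz k hkK).2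
    have hSmeas : Measurable[ℱ (k + 1)] (fun ω => S (k + 1) ω / S k ω) :=
      (hSadapted (k + 1)).div ((hSadapted k).mono (ℱ.mono (Nat.le_succ k)) le_rfl)
    have hgmeas : Measurable[ℱ k] (fun ω => z (k + 1) * S k ω) :=
      measurable_const.mul (hSadapted k)
    have hgpos : ∀ ω, 0 ≤ z (k + 1) * S k ω := fun ω =>
      mul_nonneg hz1pos (hSpos k ω).le
    have hhom := hψhom k hkK (fun ω => S (k + 1) ω / S k ω)
      (fun ω => z (k + 1) * S k ω) hSmeas hgmeas hgpos
    have key : (fun ω => z (k + 1) * S k ω * (S (k + 1) ω / S k ω)) =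
        fun ω' => Z (k + 1) ω' * S (k + 1) ω' := by
      funext ω
      rw [hZdet (k + 1) hk1K]
      field_simp [(hSpos k ω).ne']
    rw [key] at hhom
    funext ω
    have hfpos : 0 ≤ ψ k (fun ω' => Z (k + 1) ω' * S (k + 1) ω') ω := by
      apply hψpos k hkK _ (fun ω' => ?_) ω
      rw [hZdet (k + 1) hk1K]
      exact mul_nonneg hz1pos (hSpos _ _).le
    have hrec := hZrec k hkK ω
    rw [hZdet k (le_of_lt hkK)] at hrec
    set f := ψ k (fun ω' => Z (k + 1) ω' * S (k + 1) ω') ω with hf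
    have hden : 0 < S k ω + f := by
      have := hSpos k ω; linarith
    simp only at hrec
    rw [eq_div_iff hden.ne'] at hrec
    have hfeq : f * (1 - z k) = z k * S k ω := by linear_combination -hrec
    have hval : z (k + 1) * S k ω * ψ k (fun ω => S (k + 1) ω / S k ω) ω = f :=
      (congrFun hhom ω).symm
    have hSk : S k ω ≠ 0 := (hSpos k ω).ne'
    have hne : (1 - z k) * z (k + 1) ≠ 0 := mul_ne_zero (by linarith) hz1
    rw [eq_div_iff hne]
    have h2 : ψ k (fun ω => S (k + 1) ω / S k ω) ω * ((1 - z k) * z (k + 1)) * S k ω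
        = z k * S k ω := by linear_combination (1 - z k) * hval + hfeq
    exact mul_right_cancel₀ hSk h2
  · rw [← hZK]; exact hZdet K le_rfl
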